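/- Let {1*, X*} ⊂ Hom_R(A, R) be the R-linear dual basis of the basis {1, X} of A, and let φ : Hom_R(A, R) → A be the R-linear map determined by φ(1*) = X and φ(X*) = 1. Define the convolution product on Hom_R(A, R) by (f ★ g)(a) = (f ⊗ g)(Δ(a)) (composed with the multiplication R ⊗_R R → R). Then φ is bijective, φ(ε) = 1, and φ(f ★ g) = φ(f)·φ(g) for all f, g ∈ Hom_R(A, R); that is, φ is an isomorphism of R-algebras from the convolution algebra (Hom_R(A, R), ★, ε) to A. -/

import Mathlib

open Polynomial TensorProduct

set_option synthInstance.maxHeartbeats 1000000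
set_option maxHeartbeats 1000000

noncomputable section

/-- `R = 𝔽₂[Q]/(Q²)`, the dual numbers over the field with two elements. -/
abbrev R2 : Type := DualNumber (ZMod 2)

/-- The element `Q ∈ R` with `Q² = 0`. -/
noncomputable def Qe : R2 := DualNumber.eps

/-- The polynomial `X² - Q·X` over `R`. -/
noncomputable def BNpoly : Polynomial R2 := X ^ 2 - C Qe * X

/-- The Bar-Natan Frobenius algebra `A = R[X]/(X² - Q·X)`. -/
abbrev BN : Type := AdjoinRoot BNpoly

/-- The class of `X` in `A`. -/
noncomputable def Xa : BN := AdjoinRoot.root BNpoly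


lemma BNmonic : BNpoly.Monic :=
  Polynomial.monic_X_pow_sub ((Polynomial.degree_C_mul_X_le Qe).trans_lt (by norm_num))

lemma BNdeg : BNpoly.natDegree = 2 := by
  unfold BNpoly
  compute_degree!

noncomputable def B : Module.Basis (Fin 2) R2 BN :=
  (Module.Basis.reindex (AdjoinRoot.powerBasis' BNmonic).basis (finCongr (by rw [AdjoinRoot.powerBasis'_dim, BNdeg])))

lemma B0 : B 0 = 1 := by
  simp only [B, Module.Basis.reindex_apply, finCongr_symm, finCongr_apply,
    (AdjoinRoot.powerBasis' BNmonic).basis_eq_pow]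
  simp
lemma B1 : B 1 = Xa := by
  simp only [B, Module.Basis.reindex_apply, finCongr_symm, finCongr_apply,
    (AdjoinRoot.powerBasis' BNmonic).basis_eq_pow]
  simp [Xa, AdjoinRoot.powerBasis'_gen]

lemma Xsq : Xa * Xa = Qe • Xa := by
  have h : eval₂ (AdjoinRoot.of BNpoly) (AdjoinRoot.root BNpoly) (X ^ 2 - C Qe * X) = 0 :=
    AdjoinRoot.eval₂_root BNpoly
  simp only [eval₂_sub, eval₂_pow, eval₂_X, eval₂_mul, eval₂_C, sub_eq_zero] at h
  rw [show Xa * Xa = AdjoinRoot.root BNpoly ^ 2 from (sq _).symm, h]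
  exact ((Algebra.smul_def Qe Xa).trans (by rw [AdjoinRoot.algebraMap_eq]; rfl)).symm

lemma ext2 {f g : BN →ₗ[R2] R2} (h1 : f 1 = g 1) (hX : f Xa = g Xa) : f = g := by
  apply B.ext
  intro i
  fin_cases i
  · simpa [B0] using h1
  · simpa [B1] using hX


/-- the map `φ : Hom_R(A,R) → A` with `φ(1*) = X`, `φ(X*) = 1`
is an isomorphism of `R`-algebras from the convolution algebra
`(Hom_R(A,R), ★, ε)` (where `(f ★ g)(a) = (f ⊗ g)(Δ a)` followed by
multiplication `R ⊗ R → R`) to `A`: it is bijective, sends the convolution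
unit `ε` to `1`, and is multiplicative. -/
theorem barNatan_selfDual_algebra
    (ε : BN →ₗ[R2] R2) (hε1 : ε 1 = 0) (hεX : ε Xa = 1)
    (Δ : BN →ₗ[R2] BN ⊗[R2] BN)
    (hΔ1 : Δ 1 = (1 : BN) ⊗ₜ[R2] Xa + Xa ⊗ₜ[R2] (1 : BN) + Qe • ((1 : BN) ⊗ₜ[R2] (1 : BN)))
    (hΔX : Δ Xa = Xa ⊗ₜ[R2] Xa)
    -- the dual basis functionals `1*` and `X*` of the basis `{1, X}` of `A`
    (oneDual : BN →ₗ[R2] R2) (h11 : oneDual 1 = 1) (h1X : oneDual Xa = 0)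
    (XDual : BN →ₗ[R2] R2) (hX1 : XDual 1 = 0) (hXX : XDual Xa = 1)
    -- the `R`-linear map `φ` determined by `φ(1*) = X` and `φ(X*) = 1`
    (φ : (BN →ₗ[R2] R2) →ₗ[R2] BN) (hφ1 : φ oneDual = Xa) (hφX : φ XDual = 1) :
    Function.Bijective φ ∧ φ ε = 1 ∧
      ∀ f g : BN →ₗ[R2] R2,
        φ (((LinearMap.mul' R2 R2).comp (TensorProduct.map f g)).comp Δ) = φ f * φ g := by
  have hext : ∀ f : BN →ₗ[R2] R2, f = f 1 • oneDual + f Xa • XDual := by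
    intro f
    apply ext2 <;> simp [h11, h1X, hX1, hXX]
  have hφ : ∀ f : BN →ₗ[R2] R2, φ f = f 1 • Xa + f Xa • (1 : BN) := by
    intro f
    conv_lhs => rw [hext f]
    rw [map_add, map_smul, map_smul, hφ1, hφX]
  have hrep : ∀ a : BN, a = oneDual a • (1 : BN) + XDual a • Xa := by
    intro a
    have h := B.sum_repr a
    rw [Fin.sum_univ_two, B0, B1] at h
    have e1 : oneDual a = B.repr a 0 := by
      conv_lhs => rw [← h]
      simp only [map_add, map_smul, h11, h1X, smul_eq_mul, mul_one, mul_zero, add_zero]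
    have e2 : XDual a = B.repr a 1 := by
      conv_lhs => rw [← h]
      simp only [map_add, map_smul, hX1, hXX, smul_eq_mul, mul_one, mul_zero, zero_add]
    rw [e1, e2, h]
  refine ⟨⟨?_, ?_⟩, ?_, ?_⟩
  · intro f g hfg
    rw [hφ f, hφ g] at hfg
    have h1' : f 1 = g 1 := by
      have := congrArg XDual hfg
      simpa [hX1, hXX] using this
    have hX' : f Xa = g Xa := by
      have := congrArg oneDual hfg
      simpa [h11, h1X] using this
    exact ext2 h1' hX'
  · intro a
    refine ⟨XDual a • oneDual + oneDual a • XDual, ?_⟩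
    rw [hφ]
    simp only [LinearMap.add_apply, LinearMap.smul_apply, h11, h1X, hX1, hXX,
      smul_eq_mul, mul_one, mul_zero, add_zero, zero_add]
    rw [add_comm]
    exact (hrep a).symm
  · rw [hφ ε, hε1, hεX]; module
  · intro f g
    set c := ((LinearMap.mul' R2 R2).comp (TensorProduct.map f g)).comp Δ with hc
    have hc1 : c 1 = f 1 * g Xa + f Xa * g 1 + Qe * (f 1 * g 1) := by
      simp [hc, hΔ1, smul_eq_mul, mul_comm]
    have hcX : c Xa = f Xa * g Xa := by
      simp [hc, hΔX]
    rw [hφ c, hφ f, hφ g, hc1, hcX]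
    rw [mul_add, add_mul, add_mul, smul_mul_smul_comm, smul_mul_smul_comm,
      smul_mul_smul_comm, smul_mul_smul_comm, Xsq, smul_smul]
    simp only [mul_one, one_mul]
    module
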